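/- Let G be a weighted graph, k = 2R+1 for an integer R ≥ 0, and H′ ⊆ G a subgraph. Let P be a shortest x–y path in G containing (in order from x to y) the edges e_1 = {x, v_1}, e_i = {u_i, v_i}, and e_t = {u_t, y}, all belonging to H′, so that dist_G(x,y) = w(e_1) + dist_G(v_1,u_t) + w(e_t) and dist_G(v_1,u_t) = dist_G(v_1,u_i) + w(e_i) + dist_G(v_i,u_t). Let s_x, s_i, s_y be vertices with dist_{H′}(s_x,x) ≤ R·w(e_1), dist_{H′}(s_i,u_i) ≤ R·w(e_i), and dist_{H′}(y,s_y) ≤ R·w(e_t), and suppose dist_{H′}(v_1,u_i) ≤ k·dist_G(v_1,u_i) and dist_{H′}(v_i,u_t) ≤ k·dist_G(v_i,u_t). Then dist_{H′}(s_x,s_i) + dist_{H′}(s_i,s_y) ≤ k·dist_G(x,y) − R·(w(e_1)+w(e_t)). -/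

import Mathlib

/- Weighted graphs: a `SimpleGraph V` together with a symmetric weight function
`w : V → V → ℝ≥0` that is positive on edges.  The weight of a walk is the sum of
its edge weights, and `wDist G w u v` is the shortest-path distance in `G`
(`∞` if `u` and `v` are not connected). -/

open scoped ENNReal

noncomputable def walkWeight {V : Type*} {G : SimpleGraph V} (w : V → V → NNReal)
    {u v : V} (p : G.Walk u v) : ℝ≥0∞ :=
  (p.darts.map fun d => (w d.toProd.1 d.toProd.2 : ℝ≥0∞)).sum

/-- Shortest-path distance in `G` w.r.t. the weights `w`. -/
noncomputable def wDist {V : Type*} (G : SimpleGraph V) (w : V → V → NNReal) (u v : V) : ℝ≥0∞ :=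
  ⨅ p : G.Walk u v, walkWeight w p

lemma walkWeight_append {V : Type*} {G : SimpleGraph V} (w : V → V → NNReal)
    {u v x : V} (p : G.Walk u v) (q : G.Walk v x) :
    walkWeight w (p.append q) = walkWeight w p + walkWeight w q := by
  simp [walkWeight, SimpleGraph.Walk.darts_append]

lemma wDist_triangle' {V : Type*} (G : SimpleGraph V) (w : V → V → NNReal)
    (u m v : V) : wDist G w u v ≤ wDist G w u m + wDist G w m v := by
  simp only [wDist]
  rw [ENNReal.iInf_add]
  refine le_iInf fun p => ?_
  rw [ENNReal.add_iInf]
  refine le_iInf fun q => ?_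
  rw [← walkWeight_append]
  exact iInf_le _ _

lemma wDist_symm {V : Type*} (G : SimpleGraph V) (w : V → V → NNReal)
    (hsymm : ∀ u v, w u v = w v u) (u v : V) :
    wDist G w u v = wDist G w v u := by
  have key : ∀ a b : V, wDist G w a b ≤ wDist G w b a := by
    intro a b
    refine le_iInf fun p => ?_
    refine le_trans (iInf_le _ p.reverse) (le_of_eq ?_)
    simp only [walkWeight, SimpleGraph.Walk.darts_reverse, List.map_reverse,
      List.sum_reverse, List.map_map]
    congr 1
    refine List.map_congr_left fun d _ => ?_
    simp [Function.comp, hsymm d.toProd.1 d.toProd.2]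
  exact le_antisymm (key u v) (key v u)

lemma wDist_le_of_adj {V : Type*} {G : SimpleGraph V} (w : V → V → NNReal)
    {u v : V} (h : G.Adj u v) : wDist G w u v ≤ (w u v : ℝ≥0∞) := by
  refine le_trans (iInf_le _ (SimpleGraph.Walk.cons h SimpleGraph.Walk.nil)) ?_
  simp [walkWeight]

/-- **Claim.** Let `k = 2R+1` and `H' ⊆ G`.  Let a shortest `x`–`y` path in `G` contain,
in order, the edges `e₁ = {x,v₁}`, `eᵢ = {uᵢ,vᵢ}`, `eₜ = {uₜ,y}`, all in `H'`, so that
`dist_G(x,y) = w(e₁) + dist_G(v₁,uₜ) + w(eₜ)` and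
`dist_G(v₁,uₜ) = dist_G(v₁,uᵢ) + w(eᵢ) + dist_G(vᵢ,uₜ)`.  Let `s_x, s_i, s_y` be centers
with `dist_{H'}(s_x,x) ≤ R·w(e₁)`, `dist_{H'}(s_i,uᵢ) ≤ R·w(eᵢ)`,
`dist_{H'}(y,s_y) ≤ R·w(eₜ)`, and suppose `dist_{H'}(v₁,uᵢ) ≤ k·dist_G(v₁,uᵢ)` and
`dist_{H'}(vᵢ,uₜ) ≤ k·dist_G(vᵢ,uₜ)`.  Then
`dist_{H'}(s_x,s_i) + dist_{H'}(s_i,s_y) ≤ k·dist_G(x,y) − R·(w(e₁)+w(eₜ))`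
(stated in the subtraction-free form). -/
theorem center_dist_sum_after_addition {V : Type*} (G H' : SimpleGraph V) (hH'G : H' ≤ G)
    (w : V → V → NNReal)
    (hsymm : ∀ u v, w u v = w v u)
    (hpos : ∀ u v, G.Adj u v → 0 < w u v)
    (R k : ℕ) (hk : k = 2 * R + 1)
    (x v1 ui vi ut y sx si sy : V)
    (he1 : H'.Adj x v1) (hei : H'.Adj ui vi) (het : H'.Adj ut y)
    (hG1 : wDist G w x y = (w x v1 : ℝ≥0∞) + wDist G w v1 ut + (w ut y : ℝ≥0∞))
    (hG2 : wDist G w v1 ut = wDist G w v1 ui + (w ui vi : ℝ≥0∞) + wDist G w vi ut)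
    (hsx : wDist H' w sx x ≤ (R : ℝ≥0∞) * (w x v1 : ℝ≥0∞))
    (hsi : wDist H' w si ui ≤ (R : ℝ≥0∞) * (w ui vi : ℝ≥0∞))
    (hsy : wDist H' w y sy ≤ (R : ℝ≥0∞) * (w ut y : ℝ≥0∞))
    (h1 : wDist H' w v1 ui ≤ (k : ℝ≥0∞) * wDist G w v1 ui)
    (h2 : wDist H' w vi ut ≤ (k : ℝ≥0∞) * wDist G w vi ut) :
    wDist H' w sx si + wDist H' w si sy +
        (R : ℝ≥0∞) * ((w x v1 : ℝ≥0∞) + (w ut y : ℝ≥0∞)) ≤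
      (k : ℝ≥0∞) * wDist G w x y := by
  set w1 : ℝ≥0∞ := (w x v1 : ℝ≥0∞)
  set wi : ℝ≥0∞ := (w ui vi : ℝ≥0∞)
  set wt : ℝ≥0∞ := (w ut y : ℝ≥0∞)
  -- bound wDist H' sx si
  have hA : wDist H' w sx si ≤
      (R : ℝ≥0∞) * w1 + w1 + (k : ℝ≥0∞) * wDist G w v1 ui + (R : ℝ≥0∞) * wi := by
    calc wDist H' w sx si
        ≤ wDist H' w sx x + wDist H' w x si := wDist_triangle' H' w sx x si
      _ ≤ wDist H' w sx x + (wDist H' w x v1 + wDist H' w v1 si) := by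
          gcongr; exact wDist_triangle' H' w x v1 si
      _ ≤ wDist H' w sx x + (wDist H' w x v1 + (wDist H' w v1 ui + wDist H' w ui si)) := by
          gcongr; exact wDist_triangle' H' w v1 ui si
      _ ≤ (R : ℝ≥0∞) * w1 + (w1 + ((k : ℝ≥0∞) * wDist G w v1 ui + (R : ℝ≥0∞) * wi)) := by
          gcongr
          · exact wDist_le_of_adj w he1
          · rw [wDist_symm H' w hsymm]; exact hsi
      _ = (R : ℝ≥0∞) * w1 + w1 + (k : ℝ≥0∞) * wDist G w v1 ui + (R : ℝ≥0∞) * wi := by ring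
  have hB : wDist H' w si sy ≤
      (R : ℝ≥0∞) * wi + wi + (k : ℝ≥0∞) * wDist G w vi ut + wt + (R : ℝ≥0∞) * wt := by
    calc wDist H' w si sy
        ≤ wDist H' w si ui + wDist H' w ui sy := wDist_triangle' H' w si ui sy
      _ ≤ wDist H' w si ui + (wDist H' w ui vi + wDist H' w vi sy) := by
          gcongr; exact wDist_triangle' H' w ui vi sy
      _ ≤ wDist H' w si ui + (wDist H' w ui vi +
            (wDist H' w vi ut + wDist H' w ut sy)) := by
          gcongr; exact wDist_triangle' H' w vi ut sy
      _ ≤ wDist H' w si ui + (wDist H' w ui vi +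
            (wDist H' w vi ut + (wDist H' w ut y + wDist H' w y sy))) := by
          gcongr; exact wDist_triangle' H' w ut y sy
      _ ≤ (R : ℝ≥0∞) * wi + (wi + ((k : ℝ≥0∞) * wDist G w vi ut +
            (wt + (R : ℝ≥0∞) * wt))) := by
          gcongr
          · exact wDist_le_of_adj w hei
          · exact wDist_le_of_adj w het
      _ = (R : ℝ≥0∞) * wi + wi + (k : ℝ≥0∞) * wDist G w vi ut + wt + (R : ℝ≥0∞) * wt := by
          ring
  rw [hG1, hG2]
  refine le_trans (add_le_add_left (add_le_add hA hB) _) (le_of_eq ?_)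
  subst hk
  push_cast
  ring
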